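/- Let B be the ordinal sum of copulas B_1,…,B_n with respect to pairwise disjoint open subintervals (a_1,b_1),…,(a_n,b_n) of [0,1]. If 1/2 does not belong to any of the open intervals (a_k, b_k), then Gini's gamma of B satisfies γ(B) = 1 − (2/3)·Σ_{k=1}^n (b_k − a_k)² · (1 − φ(B_k)), where φ denotes Spearman's footrule. -/

import Mathlib

open MeasureTheory Set

/-- A bivariate copula, viewed as a real function of two variables whose defining
properties are required on the unit square. -/
def IsCopula (C : ℝ → ℝ → ℝ) : Prop :=
  (∀ v ∈ Icc (0:ℝ) 1, C 0 v = 0) ∧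
  (∀ u ∈ Icc (0:ℝ) 1, C u 0 = 0) ∧
  (∀ u ∈ Icc (0:ℝ) 1, C u 1 = u) ∧
  (∀ v ∈ Icc (0:ℝ) 1, C 1 v = v) ∧
  (∀ u₁ u₂ v₁ v₂ : ℝ, 0 ≤ u₁ → u₁ ≤ u₂ → u₂ ≤ 1 → 0 ≤ v₁ → v₁ ≤ v₂ → v₂ ≤ 1 →
    0 ≤ C u₂ v₂ - C u₂ v₁ - C u₁ v₂ + C u₁ v₁)

/-- Spearman's rho: ρ(C) = 12·∫₀¹∫₀¹ C(u,v) du dv − 3. -/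
noncomputable def spearmanRho (C : ℝ → ℝ → ℝ) : ℝ :=
  12 * (∫ u in (0:ℝ)..1, ∫ v in (0:ℝ)..1, C u v) - 3

/-- Spearman's footrule: φ(C) = 6·∫₀¹ C(u,u) du − 2. -/
noncomputable def footrule (C : ℝ → ℝ → ℝ) : ℝ :=
  6 * (∫ u in (0:ℝ)..1, C u u) - 2

/-- Gini's gamma: γ(C) = 4·∫₀¹ C(u,u) du + 4·∫₀¹ C(u,1−u) du − 2. -/
noncomputable def giniGamma (C : ℝ → ℝ → ℝ) : ℝ :=
  4 * (∫ u in (0:ℝ)..1, C u u) + 4 * (∫ u in (0:ℝ)..1, C u (1 - u)) - 2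

/-- Blomqvist's beta: β(C) = 4·C(1/2,1/2) − 1. -/
noncomputable def blomqvistBeta (C : ℝ → ℝ → ℝ) : ℝ :=
  4 * C (1/2) (1/2) - 1

/-- A copula measure of a copula `C`: a probability measure on the plane with
μ([0,u]×[0,v]) = C(u,v) for u,v in the unit interval. -/
def IsCopulaMeasure (C : ℝ → ℝ → ℝ) (μ : Measure (ℝ × ℝ)) : Prop :=
  IsProbabilityMeasure μ ∧
  ∀ u ∈ Icc (0:ℝ) 1, ∀ v ∈ Icc (0:ℝ) 1,
    μ (Icc 0 u ×ˢ Icc 0 v) = ENNReal.ofReal (C u v)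

/-- Kendall's tau expressed via a copula measure μ of C:
τ(C) = 4·∫_{[0,1]²} C dμ − 1. -/
noncomputable def kendallTauInt (C : ℝ → ℝ → ℝ) (μ : Measure (ℝ × ℝ)) : ℝ :=
  4 * (∫ p in Icc (0:ℝ) 1 ×ˢ Icc (0:ℝ) 1, C p.1 p.2 ∂μ) - 1

/-- `B` is the ordinal sum of the copulas `Bk k` with respect to the pairwise disjoint
open subintervals `(a k, b k)` of `[0,1]`. -/
def IsOrdinalSum {n : ℕ} (a b : Fin n → ℝ) (Bk : Fin n → ℝ → ℝ → ℝ)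
    (B : ℝ → ℝ → ℝ) : Prop :=
  (∀ k, 0 ≤ a k ∧ a k ≤ b k ∧ b k ≤ 1) ∧
  (Pairwise fun i j => Disjoint (Ioo (a i) (b i)) (Ioo (a j) (b j))) ∧
  (∀ k, ∀ u ∈ Icc (a k) (b k), ∀ v ∈ Icc (a k) (b k),
    B u v = a k + (b k - a k) * Bk k ((u - a k) / (b k - a k)) ((v - a k) / (b k - a k))) ∧
  (∀ u ∈ Icc (0:ℝ) 1, ∀ v ∈ Icc (0:ℝ) 1,
    (∀ k, ¬(u ∈ Icc (a k) (b k) ∧ v ∈ Icc (a k) (b k))) → B u v = min u v)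

lemma IsCopula.zero_zero {C : ℝ → ℝ → ℝ} (h : IsCopula C) : C 0 0 = 0 :=
  h.1 0 ⟨le_rfl, zero_le_one⟩

lemma IsCopula.one_one {C : ℝ → ℝ → ℝ} (h : IsCopula C) : C 1 1 = 1 :=
  h.2.2.1 1 ⟨zero_le_one, le_rfl⟩

lemma IsCopula.diag_mono {C : ℝ → ℝ → ℝ} (h : IsCopula C) :
    MonotoneOn (fun t => C t t) (Icc (0:ℝ) 1) := by
  obtain ⟨h0, h0', h1, h1', hr⟩ := h
  intro x hx y hy hxy
  have A := hr x y 0 x hx.1 hxy hy.2 le_rfl hx.1 hx.2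
  have B := hr 0 y x y le_rfl hy.1 hy.2 hx.1 hxy hy.2
  have e1 := h0' y hy
  have e2 := h0' x hx
  have e3 := h0 y hy
  have e4 := h0 x hx
  simp only
  linarith

lemma intervalIntegrable_congr_eqOn {f g : ℝ → ℝ} {x y : ℝ}
    (hf : IntervalIntegrable f volume x y) (h : EqOn f g (Set.uIcc x y)) :
    IntervalIntegrable g volume x y :=
  hf.congr_ae ((ae_restrict_iff' measurableSet_uIoc).mpr
    (Filter.Eventually.of_forall fun t ht => h (Set.uIoc_subset_uIcc ht)))

/-- Gini's gamma of an ordinal sum when 1/2 belongs to no interval (a_k, b_k):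
γ(B) = 1 − (2/3) Σ_k (b_k − a_k)² (1 − φ(B_k)). -/
theorem giniGamma_ordinalSum_of_half_notMem {n : ℕ} (a b : Fin n → ℝ)
    (Bk : Fin n → ℝ → ℝ → ℝ) (B : ℝ → ℝ → ℝ)
    (hBk : ∀ k, IsCopula (Bk k)) (hB : IsOrdinalSum a b Bk B)
    (hhalf : ∀ k, (1:ℝ)/2 ∉ Ioo (a k) (b k)) :
    giniGamma B = 1 - (2/3) * ∑ k, (b k - a k) ^ 2 * (1 - footrule (Bk k)) := by
  obtain ⟨hab, hdisj, hin, hout⟩ := hB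
  -- values at the corners of each square
  have hBa : ∀ k, B (a k) (a k) = a k := by
    intro k
    have hk := hab k
    have hmem : a k ∈ Icc (a k) (b k) := ⟨le_rfl, hk.2.1⟩
    rw [hin k (a k) hmem (a k) hmem, sub_self, zero_div, (hBk k).zero_zero]
    ring
  have hBb : ∀ k, B (b k) (b k) = b k := by
    intro k
    have hk := hab k
    have hmem : b k ∈ Icc (a k) (b k) := ⟨hk.2.1, le_rfl⟩
    rcases eq_or_lt_of_le hk.2.1 with heq | hlt
    · rw [← heq]; exact hBa k
    · have hL : b k - a k ≠ 0 := by linarith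
      rw [hin k (b k) hmem (b k) hmem, div_self hL, (hBk k).one_one]
      ring
  -- antidiagonal: B(u, 1-u) = min u (1-u)
  have hanti : ∀ u ∈ Icc (0:ℝ) 1, B u (1 - u) = min u (1 - u) := by
    intro u hu
    have hu' : 1 - u ∈ Icc (0:ℝ) 1 := ⟨by linarith [hu.2], by linarith [hu.1]⟩
    by_cases hc : ∀ k, ¬(u ∈ Icc (a k) (b k) ∧ (1 - u) ∈ Icc (a k) (b k))
    · exact hout u hu (1 - u) hu' hc
    · push_neg at hc
      obtain ⟨k, h1, h2⟩ := hc
      have hh := hhalf k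
      simp only [mem_Ioo, not_and, not_lt] at hh
      rcases lt_or_ge (a k) (1/2) with ha2 | ha2
      · have hb2 : b k ≤ 1/2 := hh ha2
        have hu12 : u = 1/2 := by
          have := h1.2; have := h2.2; linarith
        have hb12 : b k = 1/2 := le_antisymm hb2 (hu12 ▸ h1.2)
        subst hu12
        rw [show (1:ℝ) - 1/2 = 1/2 by norm_num, min_self, ← hb12]
        exact hBb k
      · have hu12 : u = 1/2 := by
          have := h1.1; have := h2.1; linarith
        have ha12 : a k = 1/2 := le_antisymm (hu12 ▸ h1.1) ha2
        subst hu12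
        rw [show (1:ℝ) - 1/2 = 1/2 by norm_num, min_self, ← ha12]
        exact hBa k
  -- antidiagonal integral equals 1/4
  have hI2 : ∫ u in (0:ℝ)..1, B u (1 - u) = 1/4 := by
    have e1 : ∫ u in (0:ℝ)..1, B u (1 - u) = ∫ u in (0:ℝ)..1, min u (1 - u) := by
      apply intervalIntegral.integral_congr
      intro u hu
      rw [uIcc_of_le (by norm_num : (0:ℝ) ≤ 1)] at hu
      exact hanti u hu
    have hcont : Continuous fun u : ℝ => min u (1 - u) :=
      continuous_id.min (continuous_const.sub continuous_id)
    have e2 : ∫ u in (0:ℝ)..(1/2), min u (1 - u) = ∫ u in (0:ℝ)..(1/2), u := by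
      apply intervalIntegral.integral_congr
      intro u hu
      rw [uIcc_of_le (by norm_num : (0:ℝ) ≤ 1/2)] at hu
      exact min_eq_left (by linarith [hu.2])
    have e3 : ∫ u in (1/2:ℝ)..1, min u (1 - u) = ∫ u in (1/2:ℝ)..1, (1 - u) := by
      apply intervalIntegral.integral_congr
      intro u hu
      rw [uIcc_of_le (by norm_num : (1/2:ℝ) ≤ 1)] at hu
      exact min_eq_right (by linarith [hu.1])
    rw [e1, ← intervalIntegral.integral_add_adjacent_intervals
        (hcont.intervalIntegrable 0 (1/2)) (hcont.intervalIntegrable (1/2) 1), e2, e3,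
        integral_id,
        intervalIntegral.integral_sub intervalIntegrable_const intervalIntegral.intervalIntegrable_id,
        intervalIntegral.integral_const, integral_id]
    norm_num
  -- the correction functions
  set F : Fin n → ℝ → ℝ := fun k u => if u ∈ Icc (a k) (b k) then B u u - u else 0 with hF
  -- if B u u ≠ u then u is interior
  have hnotend : ∀ k, ∀ u ∈ Icc (a k) (b k), B u u ≠ u → u ∈ Ioo (a k) (b k) := by
    intro k u hu hne
    refine ⟨lt_of_le_of_ne hu.1 ?_, lt_of_le_of_ne hu.2 ?_⟩
    · intro h; exact hne (by rw [← h]; exact hBa k)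
    · intro h; exact hne (by rw [h]; exact hBb k)
  -- decomposition of the diagonal
  have hdecomp : ∀ u ∈ Icc (0:ℝ) 1, B u u = u + ∑ k, F k u := by
    intro u hu
    by_cases hne : B u u = u
    · have hz : ∀ k, F k u = 0 := by
        intro k
        by_cases h : u ∈ Icc (a k) (b k) <;> simp [hF, h, hne]
      rw [Finset.sum_eq_zero fun k _ => hz k, hne, add_zero]
    · have hex : ∃ k, u ∈ Icc (a k) (b k) := by
        by_contra hno
        push_neg at hno
        exact hne (by
          rw [hout u hu u hu (fun k hk => hno k hk.1)]
          exact min_self u)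
      obtain ⟨k₀, hk₀⟩ := hex
      rw [Finset.sum_eq_single k₀ ?_ (fun h => absurd (Finset.mem_univ k₀) h)]
      · simp only [hF]
        rw [if_pos hk₀]
        ring
      · intro j _ hj
        by_cases hji : u ∈ Icc (a j) (b j)
        · exact absurd (hnotend k₀ u hk₀ hne)
            (Set.disjoint_left.mp (hdisj hj) (hnotend j u hji hne))
        · simp only [hF]
          rw [if_neg hji]
  -- per-interval facts
  have hcomp_int : ∀ k, IntervalIntegrable
      (fun u => Bk k ((u - a k) / (b k - a k)) ((u - a k) / (b k - a k)))
      volume (a k) (b k) := by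
    intro k
    have hk := hab k
    apply MonotoneOn.intervalIntegrable
    rw [uIcc_of_le hk.2.1]
    intro x hx y hy hxy
    rcases eq_or_lt_of_le hk.2.1 with heq | hlt
    · have hxy' : x = y := le_antisymm hxy (by
        have h1 := hy.2
        have h2 := hx.1
        rw [← heq] at h1
        linarith)
      exact le_of_eq (by rw [hxy'])
    · have hL : (0:ℝ) < b k - a k := by linarith
      have hgx : (x - a k) / (b k - a k) ∈ Icc (0:ℝ) 1 :=
        ⟨div_nonneg (by linarith [hx.1]) hL.le,
         (div_le_one hL).mpr (by linarith [hx.2])⟩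
      have hgy : (y - a k) / (b k - a k) ∈ Icc (0:ℝ) 1 :=
        ⟨div_nonneg (by linarith [hy.1]) hL.le,
         (div_le_one hL).mpr (by linarith [hy.2])⟩
      exact (hBk k).diag_mono hgx hgy (by gcongr)
  have hEq1 : ∀ k, EqOn (fun _ : ℝ => (0:ℝ)) (F k) (Set.uIcc 0 (a k)) := by
    intro k u hu
    have hk := hab k
    rw [uIcc_of_le hk.1] at hu
    by_cases h : u ∈ Icc (a k) (b k)
    · have he : u = a k := le_antisymm hu.2 h.1
      simp only [hF]
      rw [if_pos h, he, hBa k, sub_self]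
    · simp only [hF]
      rw [if_neg h]
  have hEq3 : ∀ k, EqOn (fun _ : ℝ => (0:ℝ)) (F k) (Set.uIcc (b k) 1) := by
    intro k u hu
    have hk := hab k
    rw [uIcc_of_le hk.2.2] at hu
    by_cases h : u ∈ Icc (a k) (b k)
    · have he : u = b k := le_antisymm h.2 hu.1
      simp only [hF]
      rw [if_pos h, he, hBb k, sub_self]
    · simp only [hF]
      rw [if_neg h]
  have hGint : ∀ k, IntervalIntegrable
      (fun u => a k + (b k - a k) * Bk k ((u - a k) / (b k - a k)) ((u - a k) / (b k - a k)) - u)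
      volume (a k) (b k) := by
    intro k
    exact (intervalIntegrable_const.add ((hcomp_int k).const_mul _)).sub intervalIntegral.intervalIntegrable_id
  have hEq2 : ∀ k, EqOn
      (fun u => a k + (b k - a k) * Bk k ((u - a k) / (b k - a k)) ((u - a k) / (b k - a k)) - u)
      (F k) (Set.uIcc (a k) (b k)) := by
    intro k u hu
    have hk := hab k
    rw [uIcc_of_le hk.2.1] at hu
    simp only [hF, if_pos hu]
    rw [hin k u hu u hu]
  have hFint1 : ∀ k, IntervalIntegrable (F k) volume 0 (a k) :=
    fun k => intervalIntegrable_congr_eqOn intervalIntegrable_const (hEq1 k)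
  have hFint2 : ∀ k, IntervalIntegrable (F k) volume (a k) (b k) :=
    fun k => intervalIntegrable_congr_eqOn (hGint k) (hEq2 k)
  have hFint3 : ∀ k, IntervalIntegrable (F k) volume (b k) 1 :=
    fun k => intervalIntegrable_congr_eqOn intervalIntegrable_const (hEq3 k)
  have hFint : ∀ k, IntervalIntegrable (F k) volume 0 1 :=
    fun k => ((hFint1 k).trans (hFint2 k)).trans (hFint3 k)
  -- value of each correction integral
  have hFval : ∀ k, ∫ u in (0:ℝ)..1, F k u
      = (b k - a k) ^ 2 * ((∫ t in (0:ℝ)..1, Bk k t t) - 1/2) := by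
    intro k
    have hk := hab k
    have h1 : ∫ u in (0:ℝ)..(a k), F k u = 0 := by
      rw [← intervalIntegral.integral_congr (hEq1 k)]
      simp
    have h3 : ∫ u in (b k)..1, F k u = 0 := by
      rw [← intervalIntegral.integral_congr (hEq3 k)]
      simp
    have h2 : ∫ u in (a k)..(b k), F k u
        = (b k - a k) ^ 2 * ((∫ t in (0:ℝ)..1, Bk k t t) - 1/2) := by
      rw [← intervalIntegral.integral_congr (hEq2 k)]
      rcases eq_or_lt_of_le hk.2.1 with heq | hlt
      · rw [← heq]
        simp
      · have hL : b k - a k ≠ 0 := by linarith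
        rw [intervalIntegral.integral_sub
            (intervalIntegrable_const.add ((hcomp_int k).const_mul _)) intervalIntegral.intervalIntegrable_id,
          intervalIntegral.integral_add intervalIntegrable_const ((hcomp_int k).const_mul _),
          intervalIntegral.integral_const_mul, intervalIntegral.integral_const,
          integral_id]
        have e1 := intervalIntegral.integral_comp_sub_right (a := a k) (b := b k)
          (fun x => Bk k (x / (b k - a k)) (x / (b k - a k))) (a k)
        have e2 := intervalIntegral.integral_comp_div (a := a k - a k) (b := b k - a k)
          (f := fun t => Bk k t t) hL
        simp only [sub_self, zero_div, div_self hL] at e1 e2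
        rw [e1, e2, smul_eq_mul, smul_eq_mul]
        ring
    rw [← intervalIntegral.integral_add_adjacent_intervals
        ((hFint1 k).trans (hFint2 k)) (hFint3 k),
      ← intervalIntegral.integral_add_adjacent_intervals (hFint1 k) (hFint2 k),
      h1, h2, h3]
    ring
  -- diagonal integral
  have hI1 : ∫ u in (0:ℝ)..1, B u u
      = 1/2 + ∑ k, (b k - a k) ^ 2 * ((∫ t in (0:ℝ)..1, Bk k t t) - 1/2) := by
    have e : ∫ u in (0:ℝ)..1, B u u = ∫ u in (0:ℝ)..1, (u + ∑ k, F k u) := by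
      apply intervalIntegral.integral_congr
      intro u hu
      rw [uIcc_of_le (by norm_num : (0:ℝ) ≤ 1)] at hu
      exact hdecomp u hu
    have hsum_int : IntervalIntegrable (fun u => ∑ k, F k u) volume 0 1 := by
      have h := IntervalIntegrable.sum (μ := volume) (a := (0:ℝ)) (b := 1)
        Finset.univ (fun k (_ : k ∈ Finset.univ) => hFint k)
      have he : (∑ i : Fin n, F i) = fun u => ∑ k, F k u := by
        ext u; simp
      rwa [he] at h
    rw [e, intervalIntegral.integral_add intervalIntegral.intervalIntegrable_id hsum_int,
      intervalIntegral.integral_finset_sum (fun k _ => hFint k),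
      integral_id,
      Finset.sum_congr rfl (fun k _ => hFval k)]
    norm_num
  -- assemble
  have hfoot : ∀ k, (1:ℝ) - footrule (Bk k) = 3 - 6 * ∫ t in (0:ℝ)..1, Bk k t t := by
    intro k
    simp only [footrule]
    ring
  rw [giniGamma, hI1, hI2]
  simp only [hfoot]
  have hs : ∑ k, (b k - a k) ^ 2 * (3 - 6 * ∫ t in (0:ℝ)..1, Bk k t t)
      = (-6 : ℝ) * ∑ k, (b k - a k) ^ 2 * ((∫ t in (0:ℝ)..1, Bk k t t) - 1/2) := by
    rw [Finset.mul_sum]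
    exact Finset.sum_congr rfl fun k _ => by ring
  rw [hs]
  ring
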